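/- Let X be an integrable real random variable with cumulative distribution function F, and for a > 0 let H(a) = ∫_0^a ( F(−x) − (1 − F(x⁻)) ) dx, where F(x⁻) denotes the left limit of F at x. Then for every a > 0, E[T_a(X)] = −H(a), where T_a(X) = min(|X|, a)·sign(X). -/

import Mathlib

open MeasureTheory ProbabilityTheory Real

/-- The truncated version `T_a(x) = min(|x|, a) · sign(x)` of a real number. -/
noncomputable def truncAt (a : ℝ) (x : ℝ) : ℝ := min |x| a * Real.sign x

lemma truncAt_eq (a x : ℝ) (ha : 0 < a) :
    truncAt a x = min (max x 0) a - min (max (-x) 0) a := by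
  rcases lt_trichotomy x 0 with h | h | h
  · rw [truncAt, Real.sign_of_neg h, abs_of_neg h]
    rw [max_eq_right h.le, max_eq_left (by linarith), min_eq_left ha.le]
    ring
  · simp [truncAt, h, min_eq_left ha.le]
  · rw [truncAt, Real.sign_of_pos h, abs_of_pos h]
    rw [max_eq_left h.le, max_eq_right (by linarith), min_eq_left ha.le]
    ring

lemma leftLim_cdf {Ω : Type*} {m0 : MeasurableSpace Ω} {μ : Measure Ω}
    [IsProbabilityMeasure μ] {X : Ω → ℝ} (F : ℝ → ℝ)
    (hF : ∀ x : ℝ, F x = (μ {ω | X ω ≤ x}).toReal) (t : ℝ) :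
    Function.leftLim F t = (μ {ω | X ω < t}).toReal := by
  have hFmono : Monotone F := by
    intro x y hxy
    rw [hF x, hF y]
    exact ENNReal.toReal_mono (measure_ne_top μ _)
      (measure_mono fun ω hω => le_trans hω hxy)
  set u : ℕ → ℝ := fun n => t - 1 / (n + 1) with hu
  have hu_lt : ∀ n, u n < t := fun n => by
    have : (0:ℝ) < 1 / (n + 1) := by positivity
    simp only [hu]; linarith
  have hu_tendsto : Filter.Tendsto u Filter.atTop (nhds t) := by
    have := tendsto_one_div_add_atTop_nhds_zero_nat (𝕜 := ℝ)
    simpa [hu, one_div] using Filter.Tendsto.sub (tendsto_const_nhds (x := t)) this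
  have hsets_mono : Monotone (fun n => {ω | X ω ≤ u n}) := by
    intro n m hnm ω hω
    simp only [Set.mem_setOf_eq] at hω ⊢
    refine le_trans hω ?_
    have hc : (n:ℝ) ≤ m := Nat.cast_le.mpr hnm
    have : (1:ℝ) / (m + 1) ≤ 1 / (n + 1) := by gcongr
    simp only [hu]; linarith
  have hunion : (⋃ n, {ω | X ω ≤ u n}) = {ω | X ω < t} := by
    ext ω
    simp only [Set.mem_iUnion, Set.mem_setOf_eq]
    constructor
    · rintro ⟨n, hn⟩; exact lt_of_le_of_lt hn (hu_lt n)
    · intro hω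
      obtain ⟨n, hn⟩ := exists_nat_one_div_lt (sub_pos.mpr hω)
      exact ⟨n, by simp only [hu]; linarith⟩
  have h1 : Filter.Tendsto (fun n => F (u n)) Filter.atTop
      (nhds (Function.leftLim F t)) := by
    refine (hFmono.tendsto_leftLim t).comp ?_
    exact tendsto_nhdsWithin_of_tendsto_nhds_of_eventually_within _ hu_tendsto
      (Filter.Eventually.of_forall hu_lt)
  have h2 : Filter.Tendsto (fun n => F (u n)) Filter.atTop
      (nhds ((μ {ω | X ω < t}).toReal)) := by
    have := tendsto_measure_iUnion_atTop (μ := μ) hsets_mono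
    rw [hunion] at this
    have h3 := (ENNReal.tendsto_toReal (measure_ne_top μ _)).comp this
    simp only [Function.comp_def] at h3
    simpa only [hF] using h3
  exact tendsto_nhds_unique h1 h2

theorem expectation_trunc_eq_neg_H
    {Ω : Type*} {m0 : MeasurableSpace Ω} {μ : Measure Ω} [IsProbabilityMeasure μ]
    {X : Ω → ℝ} (hXint : Integrable X μ)
    (F : ℝ → ℝ) (hF : ∀ x : ℝ, F x = (μ {ω | X ω ≤ x}).toReal)
    {a : ℝ} (ha : 0 < a) :
    ∫ ω, truncAt a (X ω) ∂μ =
      -(∫ x in (0 : ℝ)..a, (F (-x) - (1 - Function.leftLim F x))) := by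
  obtain ⟨X', hX'meas, hXX'⟩ := hXint.aemeasurable
  -- measures of level sets agree for X and X'
  have hμle : ∀ x : ℝ, μ {ω | X ω ≤ x} = μ {ω | X' ω ≤ x} := fun x =>
    measure_congr (Filter.eventuallyEq_set.mpr (hXX'.mono fun ω h => by
      simp only [Set.mem_setOf_eq, h]))
  have hμlt : ∀ x : ℝ, μ {ω | X ω < x} = μ {ω | X' ω < x} := fun x =>
    measure_congr (Filter.eventuallyEq_set.mpr (hXX'.mono fun ω h => by
      simp only [Set.mem_setOf_eq, h]))
  have hF' : ∀ x : ℝ, F x = (μ {ω | X' ω ≤ x}).toReal := fun x => by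
    rw [hF x, hμle x]
  have hleft : ∀ t : ℝ, Function.leftLim F t = (μ {ω | X' ω < t}).toReal := fun t => by
    rw [leftLim_cdf F hF t, hμlt t]
  -- the two nonnegative truncations
  set Y : Ω → ℝ := fun ω => min (max (X' ω) 0) a with hY
  set Z : Ω → ℝ := fun ω => min (max (-X' ω) 0) a with hZ
  have hYmeas : Measurable Y := (hX'meas.max measurable_const).min measurable_const
  have hZmeas : Measurable Z := ((hX'meas.neg).max measurable_const).min measurable_const
  have hYnn : ∀ ω, 0 ≤ Y ω := fun ω => le_min (le_max_right _ _) ha.le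
  have hZnn : ∀ ω, 0 ≤ Z ω := fun ω => le_min (le_max_right _ _) ha.le
  have hYbd : ∀ ω, Y ω ≤ a := fun ω => min_le_right _ _
  have hZbd : ∀ ω, Z ω ≤ a := fun ω => min_le_right _ _
  have hYint : Integrable Y μ := by
    refine Integrable.mono' (integrable_const a) hYmeas.aestronglyMeasurable ?_
    exact Filter.Eventually.of_forall fun ω => by
      rw [Real.norm_eq_abs, abs_of_nonneg (hYnn ω)]; exact hYbd ω
  have hZint : Integrable Z μ := by
    refine Integrable.mono' (integrable_const a) hZmeas.aestronglyMeasurable ?_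
    exact Filter.Eventually.of_forall fun ω => by
      rw [Real.norm_eq_abs, abs_of_nonneg (hZnn ω)]; exact hZbd ω
  -- LHS = ∫ Y - ∫ Z
  have hLHS : ∫ ω, truncAt a (X ω) ∂μ = (∫ ω, Y ω ∂μ) - ∫ ω, Z ω ∂μ := by
    have h1 : ∫ ω, truncAt a (X ω) ∂μ = ∫ ω, (Y ω - Z ω) ∂μ := by
      refine integral_congr_ae (hXX'.mono fun ω h => ?_)
      simp only [hY, hZ, h, truncAt_eq a (X' ω) ha]
    rw [h1, integral_sub hYint hZint]
  -- layer cake for Y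
  have hYlc : ∫ ω, Y ω ∂μ
      = ∫ t in Set.Ioc 0 a, (μ {ω | t ≤ X' ω}).toReal := by
    rw [hYint.integral_eq_integral_Ioc_meas_le (Filter.Eventually.of_forall hYnn)
      (Filter.Eventually.of_forall hYbd)]
    refine setIntegral_congr_fun measurableSet_Ioc fun t ht => ?_
    have hset : {ω | t ≤ Y ω} = {ω | t ≤ X' ω} := by
      ext ω
      simp only [Set.mem_setOf_eq, hY, le_min_iff, le_max_iff]
      constructor
      · rintro ⟨h1 | h1, _⟩
        · exact h1
        · linarith [ht.1]
      · exact fun h => ⟨Or.inl h, ht.2⟩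
    rw [hset]; rfl
  -- layer cake for Z
  have hZlc : ∫ ω, Z ω ∂μ
      = ∫ t in Set.Ioc 0 a, (μ {ω | X' ω ≤ -t}).toReal := by
    rw [hZint.integral_eq_integral_Ioc_meas_le (Filter.Eventually.of_forall hZnn)
      (Filter.Eventually.of_forall hZbd)]
    refine setIntegral_congr_fun measurableSet_Ioc fun t ht => ?_
    have hset : {ω | t ≤ Z ω} = {ω | X' ω ≤ -t} := by
      ext ω
      simp only [Set.mem_setOf_eq, hZ, le_min_iff, le_max_iff]
      constructor
      · rintro ⟨h1 | h1, _⟩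
        · linarith
        · linarith [ht.1]
      · exact fun h => ⟨Or.inl (by linarith), ht.2⟩
    rw [hset]; rfl
  -- rewriting the integrands on the RHS
  have hg : ∀ t : ℝ, 1 - Function.leftLim F t = (μ {ω | t ≤ X' ω}).toReal := by
    intro t
    rw [hleft t]
    have hs : MeasurableSet {ω | X' ω < t} := measurableSet_lt hX'meas measurable_const
    have hcompl : {ω | t ≤ X' ω} = {ω | X' ω < t}ᶜ := by
      ext ω; simp [not_lt]
    rw [hcompl, measure_compl hs (measure_ne_top μ _), measure_univ,
      ENNReal.toReal_sub_of_le prob_le_one ENNReal.one_ne_top, ENNReal.toReal_one]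
  -- integrability of the two integrands on Ioc 0 a
  have hg_int : IntegrableOn (fun t => (μ {ω | t ≤ X' ω}).toReal) (Set.Ioc 0 a) := by
    have hanti : Antitone fun t => (μ {ω | t ≤ X' ω}).toReal := by
      intro s t hst
      refine ENNReal.toReal_mono (measure_ne_top μ _) (measure_mono fun ω hω => ?_)
      simp only [Set.mem_setOf_eq] at hω ⊢
      linarith
    refine Integrable.mono' (integrable_const 1)
      hanti.measurable.aestronglyMeasurable ?_
    exact Filter.Eventually.of_forall fun t => by
      rw [Real.norm_eq_abs, abs_of_nonneg ENNReal.toReal_nonneg]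
      exact ENNReal.toReal_le_of_le_ofReal zero_le_one (by simpa using prob_le_one)
  have hf_int : IntegrableOn (fun t => (μ {ω | X' ω ≤ -t}).toReal) (Set.Ioc 0 a) := by
    have hanti : Antitone fun t => (μ {ω | X' ω ≤ -t}).toReal := by
      intro s t hst
      refine ENNReal.toReal_mono (measure_ne_top μ _) (measure_mono fun ω hω => ?_)
      simp only [Set.mem_setOf_eq] at hω ⊢
      linarith
    refine Integrable.mono' (integrable_const 1)
      hanti.measurable.aestronglyMeasurable ?_
    exact Filter.Eventually.of_forall fun t => by
      rw [Real.norm_eq_abs, abs_of_nonneg ENNReal.toReal_nonneg]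
      exact ENNReal.toReal_le_of_le_ofReal zero_le_one (by simpa using prob_le_one)
  -- put it together
  rw [hLHS, hYlc, hZlc, intervalIntegral.integral_of_le ha.le]
  have hcongr : ∫ t in Set.Ioc 0 a, (F (-t) - (1 - Function.leftLim F t))
      = ∫ t in Set.Ioc 0 a,
        ((μ {ω | X' ω ≤ -t}).toReal - (μ {ω | t ≤ X' ω}).toReal) := by
    refine setIntegral_congr_fun measurableSet_Ioc fun t _ => ?_
    rw [hF' (-t), hg t]
  rw [hcongr, integral_sub hf_int hg_int]
  ring
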